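/- Let n ≥ 1 and let S = {0, 1, …, 2n}. For every configuration g ∈ Υ̂_{0,n} there exist a natural number m ≥ 1, charges f_1, …, f_m ∈ Ξ̂(0,n), and a sign ε ∈ {+1, −1} such that Q(f_m) ⋯ Q(f_1) e_{g₀} = ε e_g, where g₀ is the all-false configuration on S. (Operator form: every classical open-edge supersymmetric ground state is obtained, up to sign, by applying finitely many local fermion charge operators to the Fock vector.) -/

import Mathlib

namespace Nicolai

/-- Configurations on the finite interval `S = {a, …, b}` of integers:
`true` = occupied, `false` = empty. -/
abbrev Config (a b : ℤ) : Type := {i : ℤ // i ∈ Finset.Icc a b} → Bool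

/-- The Hilbert space `ℋ_S` with orthonormal basis indexed by configurations. -/
abbrev Hs (a b : ℤ) : Type := EuclideanSpace ℂ (Config a b)

/-- The basis vector `e_g` associated to the configuration `g`. -/
noncomputable def e (a b : ℤ) (g : Config a b) : Hs a b := EuclideanSpace.single g 1

/-- The Jordan–Wigner sign exponent: the number of occupied sites strictly to the left of `i`. -/
noncomputable def signCount (a b : ℤ) (g : Config a b) (i : ℤ) : ℕ :=
  (Finset.univ.filter fun j : {x : ℤ // x ∈ Finset.Icc a b} => j.1 < i ∧ g j = true).card

/-- The annihilation operator `c_i` (zero if `i ∉ S`). -/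
noncomputable def cAnn (a b : ℤ) (i : ℤ) : Module.End ℂ (Hs a b) where
  toFun ψ := WithLp.toLp 2 fun g =>
    if hi : i ∈ Finset.Icc a b then
      if g ⟨i, hi⟩ = false then
        ((-1 : ℂ) ^ signCount a b g i) * ψ (Function.update g ⟨i, hi⟩ true)
      else 0
    else 0
  map_add' ψ φ := by
    ext g
    simp only [PiLp.add_apply, PiLp.toLp_apply]
    split_ifs <;> simp [mul_add]
  map_smul' c ψ := by
    ext g
    simp only [PiLp.smul_apply, smul_eq_mul, RingHom.id_apply, PiLp.toLp_apply]
    split_ifs <;> ring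

/-- The creation operator `c*_i` (zero if `i ∉ S`). -/
noncomputable def cCr (a b : ℤ) (i : ℤ) : Module.End ℂ (Hs a b) where
  toFun ψ := WithLp.toLp 2 fun g =>
    if hi : i ∈ Finset.Icc a b then
      if g ⟨i, hi⟩ = true then
        ((-1 : ℂ) ^ signCount a b g i) * ψ (Function.update g ⟨i, hi⟩ false)
      else 0
    else 0
  map_add' ψ φ := by
    ext g
    simp only [PiLp.add_apply, PiLp.toLp_apply]
    split_ifs <;> simp [mul_add]
  map_smul' c ψ := by
    ext g
    simp only [PiLp.smul_apply, smul_eq_mul, RingHom.id_apply, PiLp.toLp_apply]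
    split_ifs <;> ring

/-- `q_{2i} = c_{2i+1} c*_{2i} c_{2i−1}`. -/
noncomputable def qOp (a b i : ℤ) : Module.End ℂ (Hs a b) :=
  cAnn a b (2 * i + 1) * cCr a b (2 * i) * cAnn a b (2 * i - 1)

/-- The Nicolai supercharge `Q[k,l] = Σ_{i=k}^{l} q_{2i}`. -/
noncomputable def QNic (a b k l : ℤ) : Module.End ℂ (Hs a b) :=
  ∑ i ∈ Finset.Icc k l, qOp a b i

/-- Membership in `Ξ̂_{k,l}`: a `{−1,+1}`-valued function on `{2k, …, 2l}` with no
forbidden sign triplet at interior even sites, constant on each two-site edge. -/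
def memXi (k l : ℤ) (f : ℤ → ℤ) : Prop :=
  (∀ i ∈ Finset.Icc (2 * k) (2 * l), f i = 1 ∨ f i = -1) ∧
  (∀ i : ℤ, k < i → i < l →
    ¬(f (2 * i - 1) = -1 ∧ f (2 * i) = 1 ∧ f (2 * i + 1) = -1) ∧
    ¬(f (2 * i - 1) = 1 ∧ f (2 * i) = -1 ∧ f (2 * i + 1) = 1)) ∧
  f (2 * k) = f (2 * k + 1) ∧ f (2 * l - 1) = f (2 * l)

/-- `ζ_i(+1) = c*_i`, `ζ_i(−1) = c_i`. -/
noncomputable def zeta (a b i : ℤ) (v : ℤ) : Module.End ℂ (Hs a b) :=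
  if v = 1 then cCr a b i else if v = -1 then cAnn a b i else 0

/-- The local fermion operator `Q(f) = ζ_{2k}(f(2k)) ζ_{2k+1}(f(2k+1)) ⋯ ζ_{2l}(f(2l))`,
the product taken in increasing site order. -/
noncomputable def QF (a b k l : ℤ) (f : ℤ → ℤ) : Module.End ℂ (Hs a b) :=
  ((List.range (2 * l - 2 * k + 1).toNat).map
    (fun j => zeta a b (2 * k + (j : ℤ)) (f (2 * k + (j : ℤ))))).prod

/-- `g` has a forbidden triplet at the even site `2i`. -/
def forbiddenAt (g : ℤ → Bool) (i : ℤ) : Prop :=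
  (g (2 * i - 1) = false ∧ g (2 * i) = true ∧ g (2 * i + 1) = false) ∨
  (g (2 * i - 1) = true ∧ g (2 * i) = false ∧ g (2 * i + 1) = true)

/-- Membership in `Υ̂_{k,l}`: no forbidden triplet at interior even sites and the
open SUSY boundary condition (only the values on `{2k, …, 2l}` are relevant). -/
def memUps (k l : ℤ) (g : ℤ → Bool) : Prop :=
  (∀ i : ℤ, k < i → i < l → ¬ forbiddenAt g i) ∧
  g (2 * k) = g (2 * k + 1) ∧ g (2 * l - 1) = g (2 * l)

/-- Extend a configuration on `S` to all of `ℤ` by `false`. -/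
noncomputable def ext (a b : ℤ) (g : Config a b) : ℤ → Bool :=
  fun i => if h : i ∈ Finset.Icc a b then g ⟨i, h⟩ else false

/-- The charge `f ∈ Ξ̂_{k,l}` is applicable to the configuration `g`. -/
def applicable (k l : ℤ) (f : ℤ → ℤ) (g : ℤ → Bool) : Prop :=
  ∀ i : ℤ, 2 * k ≤ i → i ≤ 2 * l → (f i = 1 → g i = false) ∧ (f i = -1 → g i = true)

/-- The configuration `f·g` resulting from the action of the charge `f ∈ Ξ̂_{k,l}` on `g`. -/
def applyCharge (k l : ℤ) (f : ℤ → ℤ) (g : ℤ → Bool) : ℤ → Bool :=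
  fun i => if 2 * k ≤ i ∧ i ≤ 2 * l then decide (f i = 1) else g i

/-- `Reachable p q g₀ g`: `g` is obtained from `g₀` by finitely many applications of
applicable charges from `Ξ̂(p,q) = ⋃_{p ≤ k < l ≤ q} Ξ̂_{k,l}`. -/
inductive Reachable (p q : ℤ) : (ℤ → Bool) → (ℤ → Bool) → Prop
  | refl (g : ℤ → Bool) : Reachable p q g g
  | step {g₀ g : ℤ → Bool} (k l : ℤ) (f : ℤ → ℤ) :
      Reachable p q g₀ g → p ≤ k → k < l → l ≤ q → memXi k l f → applicable k l f g →
      Reachable p q g₀ (applyCharge k l f g)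

/-- The fermion parity operator `P e_g = (−1)^{#occupied sites} e_g`. -/
noncomputable def parity (a b : ℤ) : Module.End ℂ (Hs a b) where
  toFun ψ := WithLp.toLp 2 fun g =>
    ((-1 : ℂ) ^ (Finset.univ.filter fun j : {x : ℤ // x ∈ Finset.Icc a b} => g j = true).card)
      * ψ g
  map_add' ψ φ := by
    ext g
    simp only [PiLp.add_apply, PiLp.toLp_apply]
    ring
  map_smul' c ψ := by
    ext g
    simp only [PiLp.smul_apply, smul_eq_mul, RingHom.id_apply, PiLp.toLp_apply]
    ring

section Part1

variable (a b : ℤ)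

lemma e_apply (h g : Config a b) : e a b h g = if g = h then 1 else 0 :=
  EuclideanSpace.single_apply h 1 g

lemma signCount_update (g : Config a b) (x : {t : ℤ // t ∈ Finset.Icc a b}) (v : Bool)
    (i : ℤ) (hx : ¬ (x.1 < i)) :
    signCount a b (Function.update g x v) i = signCount a b g i := by
  unfold signCount
  congr 1
  apply Finset.filter_congr
  intro j _
  by_cases hj : j = x
  · subst hj
    simp only [Function.update_self]
    constructor <;> rintro ⟨h1, h2⟩ <;> exact absurd h1 hx
  · rw [Function.update_of_ne hj]

lemma cCr_e (i : ℤ) (hi : i ∈ Finset.Icc a b) (h : Config a b) (hocc : h ⟨i, hi⟩ = false) :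
    cCr a b i (e a b h)
      = ((-1 : ℂ) ^ signCount a b h i) • e a b (Function.update h ⟨i, hi⟩ true) := by
  ext g
  simp only [cCr, LinearMap.coe_mk, AddHom.coe_mk, PiLp.smul_apply, smul_eq_mul, PiLp.toLp_apply]
  rw [dif_pos hi]
  by_cases hg : g = Function.update h ⟨i, hi⟩ true
  · subst hg
    rw [if_pos (Function.update_self _ _ _)]
    have h1 : Function.update (Function.update h ⟨i, hi⟩ true) ⟨i, hi⟩ false = h := by
      funext x
      by_cases hx : x = ⟨i, hi⟩
      · subst hx; simp [hocc]
      · simp [Function.update_of_ne hx]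
    rw [h1, e_apply, if_pos rfl, e_apply a b _ (Function.update h ⟨i, hi⟩ true), if_pos rfl,
      signCount_update a b h ⟨i, hi⟩ true i (by simp)]
  · rw [e_apply a b (Function.update h ⟨i, hi⟩ true) g, if_neg hg, mul_zero]
    by_cases hgi : g ⟨i, hi⟩ = true
    · rw [if_pos hgi, e_apply, if_neg, mul_zero]
      intro heq
      apply hg
      funext x
      by_cases hx : x = ⟨i, hi⟩
      · subst hx; simp [hgi]
      · rw [Function.update_of_ne hx, ← heq, Function.update_of_ne hx]
    · rw [if_neg hgi]

lemma cAnn_e (i : ℤ) (hi : i ∈ Finset.Icc a b) (h : Config a b) (hocc : h ⟨i, hi⟩ = true) :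
    cAnn a b i (e a b h)
      = ((-1 : ℂ) ^ signCount a b h i) • e a b (Function.update h ⟨i, hi⟩ false) := by
  ext g
  simp only [cAnn, LinearMap.coe_mk, AddHom.coe_mk, PiLp.smul_apply, smul_eq_mul, PiLp.toLp_apply]
  rw [dif_pos hi]
  by_cases hg : g = Function.update h ⟨i, hi⟩ false
  · subst hg
    rw [if_pos (Function.update_self _ _ _)]
    have h1 : Function.update (Function.update h ⟨i, hi⟩ false) ⟨i, hi⟩ true = h := by
      funext x
      by_cases hx : x = ⟨i, hi⟩
      · subst hx; simp [hocc]
      · simp [Function.update_of_ne hx]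
    rw [h1, e_apply, if_pos rfl, e_apply a b _ (Function.update h ⟨i, hi⟩ false), if_pos rfl,
      signCount_update a b h ⟨i, hi⟩ false i (by simp)]
  · rw [e_apply a b (Function.update h ⟨i, hi⟩ false) g, if_neg hg, mul_zero]
    by_cases hgi : g ⟨i, hi⟩ = false
    · rw [if_pos hgi, e_apply, if_neg, mul_zero]
      intro heq
      apply hg
      funext x
      by_cases hx : x = ⟨i, hi⟩
      · subst hx; simp [hgi]
      · rw [Function.update_of_ne hx, ← heq, Function.update_of_ne hx]
    · rw [if_neg hgi]

end Part1
section Part2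

variable (a b : ℤ)

lemma zeta_one (i : ℤ) : zeta a b i 1 = cCr a b i := if_pos rfl

lemma zeta_neg_one (i : ℤ) : zeta a b i (-1) = cAnn a b i := by
  rw [zeta, if_neg (by decide), if_pos rfl]

lemma neg_one_pow_pm (c : ℕ) : ((-1 : ℂ) ^ c = 1) ∨ ((-1 : ℂ) ^ c = -1) := by
  rcases Nat.even_or_odd c with hc | hc
  · left; exact hc.neg_one_pow
  · right; exact hc.neg_one_pow

lemma coe_map_eq {M : Type*} (l : List ℕ) (F : ℤ → M) :
    (l.map (fun j => F (j : ℤ))) = l.map (fun j : ℕ => F ((j : ℕ) : ℤ)) := by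
  induction l with
  | nil => rfl
  | cons x t ih => simp only [List.map_cons] at *; rw [← ih]; rfl

lemma pm_mul {x y : ℂ} (hx : x = 1 ∨ x = -1) (hy : y = 1 ∨ y = -1) :
    x * y = 1 ∨ x * y = -1 := by
  rcases hx with h | h <;> rcases hy with h' | h' <;> subst h <;> subst h' <;> norm_num

/-- Action of a product of `zeta` operators on sites `s, s+1, …, s+m` on a basis vector. -/
lemma zeta_prod_e (m : ℕ) : ∀ (s : ℤ), a ≤ s → s + m ≤ b → ∀ (f : ℤ → ℤ) (g : Config a b),
    (∀ (j : ℤ) (hj : j ∈ Finset.Icc a b), s ≤ j → j ≤ s + m →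
      (f j = 1 ∧ g ⟨j, hj⟩ = false) ∨ (f j = -1 ∧ g ⟨j, hj⟩ = true)) →
    ∃ ε : ℂ, (ε = 1 ∨ ε = -1) ∧
      (((List.range (m + 1)).map
          (fun j : ℕ => zeta a b (s + ((j : ℕ) : ℤ)) (f (s + ((j : ℕ) : ℤ))))).prod)
          (e a b g)
        = ε • e a b (fun x => if s ≤ x.1 ∧ x.1 ≤ s + m then decide (f x.1 = 1) else g x) := by
  induction m with
  | zero =>
    intro s hs hsb f g happ
    have hsmem : s ∈ Finset.Icc a b := Finset.mem_Icc.mpr ⟨hs, by push_cast at hsb; omega⟩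
    simp only [List.range_succ, List.range_zero, List.nil_append, List.map_cons, List.map_nil,
      List.prod_cons, List.prod_nil, mul_one, Nat.cast_zero, add_zero]
    rcases happ s hsmem le_rfl (by simp) with ⟨hf, hg⟩ | ⟨hf, hg⟩
    · refine ⟨(-1 : ℂ) ^ signCount a b g s, neg_one_pow_pm _, ?_⟩
      have hXY : Function.update g ⟨s, hsmem⟩ true
          = fun x : {i : ℤ // i ∈ Finset.Icc a b} =>
              if s ≤ x.1 ∧ x.1 ≤ s then decide (f x.1 = 1) else g x := by
        funext x
        by_cases hx : x = ⟨s, hsmem⟩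
        · subst hx
          simp [Function.update_self, hf]
        · rw [Function.update_of_ne hx, if_neg]
          intro ⟨h1, h2⟩
          exact hx (Subtype.ext (show x.1 = s by omega))
      rw [hf, zeta_one, cCr_e a b s hsmem g hg, hXY]
    · refine ⟨(-1 : ℂ) ^ signCount a b g s, neg_one_pow_pm _, ?_⟩
      have hXY : Function.update g ⟨s, hsmem⟩ false
          = fun x : {i : ℤ // i ∈ Finset.Icc a b} =>
              if s ≤ x.1 ∧ x.1 ≤ s then decide (f x.1 = 1) else g x := by
        funext x
        by_cases hx : x = ⟨s, hsmem⟩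
        · subst hx
          simp only [Function.update_self]
          rw [if_pos (by constructor <;> simp), hf]
          decide
        · rw [Function.update_of_ne hx, if_neg]
          intro ⟨h1, h2⟩
          exact hx (Subtype.ext (show x.1 = s by omega))
      rw [hf, zeta_neg_one, cAnn_e a b s hsmem g hg, hXY]
  | succ m ih =>
    intro s hs hsb f g happ
    have hc : ((m + 1 : ℕ) : ℤ) = (m : ℤ) + 1 := by push_cast; ring
    have hsb' : s + ((m : ℤ) + 1) ≤ b := by push_cast at hsb; omega
    have hmem : s + ((m : ℤ) + 1) ∈ Finset.Icc a b :=
      Finset.mem_Icc.mpr ⟨by omega, hsb'⟩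
    have hlast := happ (s + ((m : ℤ) + 1)) hmem (by omega) (by push_cast; omega)
    have key : ∀ (v : Bool), ((f (s + ((m : ℤ) + 1)) = 1 ∧ v = true) ∨
        (f (s + ((m : ℤ) + 1)) = -1 ∧ v = false)) →
        zeta a b (s + ((m : ℤ) + 1)) (f (s + ((m : ℤ) + 1))) (e a b g)
          = ((-1 : ℂ) ^ signCount a b g (s + ((m : ℤ) + 1))) •
              e a b (Function.update g ⟨s + ((m : ℤ) + 1), hmem⟩ v) → True := fun _ _ _ => trivial
    clear key
    set p : {t : ℤ // t ∈ Finset.Icc a b} := ⟨s + ((m : ℤ) + 1), hmem⟩ with hp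
    have step1 : ∃ (v : Bool),
        zeta a b (s + ((m : ℤ) + 1)) (f (s + ((m : ℤ) + 1))) (e a b g)
          = ((-1 : ℂ) ^ signCount a b g (s + ((m : ℤ) + 1))) • e a b (Function.update g p v)
        ∧ v = decide (f (s + ((m : ℤ) + 1)) = 1) := by
      rcases hlast with ⟨hf, hg⟩ | ⟨hf, hg⟩
      · exact ⟨true, by rw [hf, zeta_one, cCr_e a b _ hmem g hg], by simp [hf]⟩
      · refine ⟨false, by rw [hf, zeta_neg_one, cAnn_e a b _ hmem g hg], ?_⟩
        rw [hf]; decide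
    obtain ⟨v, hstep, hv⟩ := step1
    set g1 := Function.update g p v with hg1
    have happ1 : ∀ (j : ℤ) (hj : j ∈ Finset.Icc a b), s ≤ j → j ≤ s + (m : ℤ) →
        (f j = 1 ∧ g1 ⟨j, hj⟩ = false) ∨ (f j = -1 ∧ g1 ⟨j, hj⟩ = true) := by
      intro j hj hj1 hj2
      have : g1 ⟨j, hj⟩ = g ⟨j, hj⟩ := by
        rw [hg1, Function.update_of_ne]
        intro hcon
        have := congrArg Subtype.val hcon
        simp only [hp] at this
        omega
      rw [this]
      exact happ j hj hj1 (by push_cast; omega)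
    obtain ⟨ε, hε, heq⟩ := ih s hs (by push_cast at hsb ⊢; omega) f g1 happ1
    refine ⟨((-1 : ℂ) ^ signCount a b g (s + ((m : ℤ) + 1))) * ε,
        pm_mul (neg_one_pow_pm _) hε, ?_⟩
    have hXY : (fun x : {i : ℤ // i ∈ Finset.Icc a b} =>
          if s ≤ x.1 ∧ x.1 ≤ s + (m : ℤ) then decide (f x.1 = 1) else g1 x)
        = fun x : {i : ℤ // i ∈ Finset.Icc a b} =>
            if s ≤ x.1 ∧ x.1 ≤ s + ((m + 1 : ℕ) : ℤ) then decide (f x.1 = 1) else g x := by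
      funext x
      rw [hc]
      by_cases hx1 : s ≤ x.1 ∧ x.1 ≤ s + (m : ℤ)
      · rw [if_pos hx1, if_pos ⟨hx1.1, by omega⟩]
      · rw [if_neg hx1]
        by_cases hx2 : x = p
        · subst hx2
          rw [hg1, Function.update_self, if_pos ⟨by simp [hp]; omega, by simp [hp]⟩, hv]
        · rw [hg1, Function.update_of_ne hx2, if_neg]
          intro ⟨h1, h2⟩
          have hne : x.1 ≠ s + ((m : ℤ) + 1) := fun hcon => hx2 (Subtype.ext hcon)
          omega
    rw [List.range_succ, List.map_append, List.prod_append]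
    simp only [List.map_cons, List.map_nil, List.prod_cons, List.prod_nil, mul_one]
    rw [Module.End.mul_apply, hc, hstep, map_smul, heq, hXY, smul_smul, hc]

end Part2
section Part3

/-- Action of `QF` on a basis vector, given applicability. -/
lemma QF_e (a b k l : ℤ) (ha : a ≤ 2 * k) (hb : 2 * l ≤ b) (hkl : k < l)
    (f : ℤ → ℤ) (g : Config a b)
    (happ : ∀ (j : ℤ) (hj : j ∈ Finset.Icc a b), 2 * k ≤ j → j ≤ 2 * l →
      (f j = 1 ∧ g ⟨j, hj⟩ = false) ∨ (f j = -1 ∧ g ⟨j, hj⟩ = true)) :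
    ∃ ε : ℂ, (ε = 1 ∨ ε = -1) ∧
      QF a b k l f (e a b g)
        = ε • e a b (fun x => if 2 * k ≤ x.1 ∧ x.1 ≤ 2 * l then decide (f x.1 = 1) else g x) := by
  set m : ℕ := (2 * l - 2 * k).toNat with hm
  have hm1 : (m : ℤ) = 2 * l - 2 * k := by omega
  have hm2 : (2 * l - 2 * k + 1).toNat = m + 1 := by omega
  have h2 : 2 * k + (m : ℤ) = 2 * l := by omega
  obtain ⟨ε, hε, heq⟩ := zeta_prod_e a b m (2 * k) ha (by omega) f g
    (by intro j hj hj1 hj2; exact happ j hj hj1 (by omega))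
  refine ⟨ε, hε, ?_⟩
  rw [h2] at heq
  rw [show QF a b k l f = ((List.range (m + 1)).map
      (fun j : ℕ => zeta a b (2 * k + ((j : ℕ) : ℤ)) (f (2 * k + ((j : ℕ) : ℤ))))).prod from ?_]
  · exact heq
  · rw [QF, hm2]
    exact congrArg List.prod (coe_map_eq (List.range (m + 1))
      (fun j : ℤ => zeta a b (2 * k + j) (f (2 * k + j))))

end Part3
section Part4

def chargeOf (h : ℤ → Bool) : ℤ → ℤ := fun i => if h i = true then -1 else 1

def flipW (k l : ℤ) (h : ℤ → Bool) : ℤ → Bool :=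
  fun i => if 2 * k ≤ i ∧ i ≤ 2 * l then !(h i) else h i

def Inv (n : ℤ) (h : ℤ → Bool) : Prop :=
  (∀ i : ℤ, 0 < i → i < n → ¬ forbiddenAt h i) ∧ h 0 = h 1 ∧ h (2*n-1) = h (2*n) ∧
    (∀ i : ℤ, i < 0 ∨ 2*n < i → h i = false)

lemma flipW_flipW (k l : ℤ) (h : ℤ → Bool) : flipW k l (flipW k l h) = h := by
  funext i; unfold flipW; by_cases hi : 2*k ≤ i ∧ i ≤ 2*l <;> simp [hi]

lemma flipW_in (k l : ℤ) (h : ℤ → Bool) (i : ℤ) (h1 : 2*k ≤ i) (h2 : i ≤ 2*l) :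
    flipW k l h i = !(h i) := if_pos ⟨h1, h2⟩

lemma flipW_out (k l : ℤ) (h : ℤ → Bool) (i : ℤ) (hi : ¬(2*k ≤ i ∧ i ≤ 2*l)) :
    flipW k l h i = h i := if_neg hi

lemma chargeOf_true {h : ℤ → Bool} {i : ℤ} (hh : h i = true) : chargeOf h i = -1 := by
  simp [chargeOf, hh]

lemma chargeOf_false {h : ℤ → Bool} {i : ℤ} (hh : h i = false) : chargeOf h i = 1 := by
  simp [chargeOf, hh]

lemma chargeOf_eq_neg_one {h : ℤ → Bool} {i : ℤ} (hc : chargeOf h i = -1) : h i = true := by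
  cases hh : h i
  · rw [chargeOf_false hh] at hc; norm_num at hc
  · rfl

lemma chargeOf_eq_one {h : ℤ → Bool} {i : ℤ} (hc : chargeOf h i = 1) : h i = false := by
  cases hh : h i
  · rfl
  · rw [chargeOf_true hh] at hc; norm_num at hc

lemma applicable_chargeOf (k l : ℤ) (h : ℤ → Bool) : applicable k l (chargeOf h) h :=
  fun _ _ _ => ⟨chargeOf_eq_one, chargeOf_eq_neg_one⟩

lemma memXi_chargeOf (n k l : ℤ) (h : ℤ → Bool) (hInv : Inv n h) (hk : 0 ≤ k) (hkl : k < l)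
    (hl : l ≤ n) (hL : h (2*k) = h (2*k+1)) (hR : h (2*l-1) = h (2*l)) :
    memXi k l (chargeOf h) := by
  refine ⟨fun i _ => ?_, fun i hki hil => ⟨?_, ?_⟩, ?_, ?_⟩
  · cases hh : h i
    · left; exact chargeOf_false hh
    · right; exact chargeOf_true hh
  · rintro ⟨h1, h2, h3⟩
    exact hInv.1 i (by omega) (by omega)
      (Or.inr ⟨chargeOf_eq_neg_one h1, chargeOf_eq_one h2, chargeOf_eq_neg_one h3⟩)
  · rintro ⟨h1, h2, h3⟩
    exact hInv.1 i (by omega) (by omega)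
      (Or.inl ⟨chargeOf_eq_one h1, chargeOf_eq_neg_one h2, chargeOf_eq_one h3⟩)
  · unfold chargeOf; rw [hL]
  · unfold chargeOf; rw [hR]

lemma applyCharge_chargeOf (k l : ℤ) (h : ℤ → Bool) :
    applyCharge k l (chargeOf h) h = flipW k l h := by
  funext i
  unfold applyCharge flipW
  by_cases hi : 2*k ≤ i ∧ i ≤ 2*l
  · rw [if_pos hi, if_pos hi]
    cases hh : h i
    · rw [decide_eq_true (chargeOf_false hh)]; rfl
    · rw [decide_eq_false (by rw [chargeOf_true hh]; norm_num)]; rfl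
  · rw [if_neg hi, if_neg hi]

lemma Inv_flipW (n k l : ℤ) (h : ℤ → Bool) (hInv : Inv n h) (hk : 0 ≤ k) (hkl : k < l)
    (hl : l ≤ n) (hL : h (2*k) = h (2*k+1)) (hR : h (2*l-1) = h (2*l)) :
    Inv n (flipW k l h) := by
  obtain ⟨hf, h01, hnn, hsup⟩ := hInv
  refine ⟨?_, ?_, ?_, ?_⟩
  · intro i hi0 hin hforb
    unfold forbiddenAt at hforb
    have tri : i < k ∨ i = k ∨ (k < i ∧ i < l) ∨ i = l ∨ l < i := by omega
    rcases tri with hc | hc | hc | hc | hc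
    · rw [flipW_out _ _ _ _ (by omega), flipW_out _ _ _ _ (by omega),
        flipW_out _ _ _ _ (by omega)] at hforb
      exact hf i hi0 hin hforb
    · subst hc
      rcases hforb with ⟨_, p2, p3⟩ | ⟨_, p2, p3⟩ <;>
      · rw [flipW_in _ _ _ _ (by omega) (by omega)] at p2 p3
        rw [Bool.not_eq_true'] at * <;> rw [Bool.not_eq_false'] at * <;> simp_all
    · rw [flipW_in _ _ _ _ (by omega) (by omega), flipW_in _ _ _ _ (by omega) (by omega),
        flipW_in _ _ _ _ (by omega) (by omega)] at hforb
      apply hf i hi0 hin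
      unfold forbiddenAt
      rcases hforb with ⟨p1, p2, p3⟩ | ⟨p1, p2, p3⟩
      · right
        simp only [Bool.not_eq_true', Bool.not_eq_false'] at p1 p2 p3
        exact ⟨p1, p2, p3⟩
      · left
        simp only [Bool.not_eq_true', Bool.not_eq_false'] at p1 p2 p3
        exact ⟨p1, p2, p3⟩
    · subst hc
      rcases hforb with ⟨p1, p2, _⟩ | ⟨p1, p2, _⟩ <;>
      · rw [flipW_in _ _ _ _ (by omega) (by omega)] at p1 p2
        simp_all
    · rw [flipW_out _ _ _ _ (by omega), flipW_out _ _ _ _ (by omega),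
        flipW_out _ _ _ _ (by omega)] at hforb
      exact hf i hi0 hin hforb
  · by_cases hk0 : k = 0
    · subst hk0
      rw [flipW_in _ _ _ _ (by omega) (by omega), flipW_in _ _ _ _ (by omega) (by omega), h01]
    · rw [flipW_out _ _ _ _ (by omega), flipW_out _ _ _ _ (by omega)]
      exact h01
  · by_cases hln : l = n
    · subst hln
      rw [flipW_in _ _ _ _ (by omega) (by omega), flipW_in _ _ _ _ (by omega) (by omega), hnn]
    · rw [flipW_out _ _ _ _ (by omega), flipW_out _ _ _ _ (by omega)]
      exact hnn
  · intro i hi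
    rw [flipW_out _ _ _ _ (by omega)]
    exact hsup i hi

end Part4
section Part5

def rest (n : ℤ) (h : ℤ → Bool) : Config 0 (2*n) := fun x => h x.1

noncomputable def meas (n : ℤ) (h : ℤ → Bool) : ℕ :=
  ∑ e ∈ Finset.Icc (-1 : ℤ) (2*n), if h e = h (e+1) then 0 else 3^(e+1).toNat

lemma sum_split (S : Finset ℤ) (p q : ℤ) (hp : p ∈ S) (hq : q ∈ S) (hpq : p ≠ q) (t : ℤ → ℕ) :
    ∑ e ∈ S, t e = t p + t q + ∑ e ∈ (S.erase p).erase q, t e := by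
  rw [← Finset.add_sum_erase S t hp, ← Finset.add_sum_erase (S.erase p) t
    (Finset.mem_erase.mpr ⟨hpq.symm, hq⟩)]
  ring

lemma meas_lt (n : ℤ) (hn : 1 ≤ n) (h h' : ℤ → Bool) (q : ℤ) (hq0 : 0 ≤ q) (hq2n : q ≤ 2*n)
    (hsame : ∀ e : ℤ, -1 ≤ e → e ≤ 2*n → e ≠ -1 → e ≠ q →
      ((h' e = h' (e+1)) ↔ (h e = h (e+1))))
    (hbq : ¬ (h q = h (q+1))) (hq' : h' q = h' (q+1)) :
    meas n h' < meas n h := by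
  have hpS : (-1:ℤ) ∈ Finset.Icc (-1:ℤ) (2*n) := Finset.mem_Icc.mpr ⟨le_rfl, by omega⟩
  have hqS : q ∈ Finset.Icc (-1:ℤ) (2*n) := Finset.mem_Icc.mpr ⟨by omega, hq2n⟩
  have hne : (-1:ℤ) ≠ q := by omega
  unfold meas
  rw [sum_split _ (-1) q hpS hqS hne (fun e => if h' e = h' (e+1) then 0 else 3^(e+1).toNat),
    sum_split _ (-1) q hpS hqS hne (fun e => if h e = h (e+1) then 0 else 3^(e+1).toNat)]
  have hR : ∑ e ∈ ((Finset.Icc (-1:ℤ) (2*n)).erase (-1)).erase q,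
        (if h' e = h' (e+1) then 0 else 3^(e+1).toNat)
      = ∑ e ∈ ((Finset.Icc (-1:ℤ) (2*n)).erase (-1)).erase q,
        (if h e = h (e+1) then 0 else 3^(e+1).toNat) := by
    apply Finset.sum_congr rfl
    intro x hx
    have hx1 := Finset.mem_erase.mp hx
    have hx2 := Finset.mem_erase.mp hx1.2
    have hx3 := Finset.mem_Icc.mp hx2.2
    have := hsame x hx3.1 hx3.2 hx2.1 hx1.1
    by_cases hb : h x = h (x+1)
    · rw [if_pos hb, if_pos (this.mpr hb)]
    · rw [if_neg hb, if_neg (fun hc => hb (this.mp hc))]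
  rw [hR]
  have h1 : (if h' q = h' (q+1) then 0 else 3^(q+1).toNat) = 0 := if_pos hq'
  have h2 : (if h' (-1:ℤ) = h' (-1+1) then 0 else 3^((-1:ℤ)+1).toNat) ≤ 1 := by
    split
    · omega
    · norm_num
  have h3 : (if h q = h (q+1) then 0 else 3^(q+1).toNat) = 3^(q+1).toNat := if_neg hbq
  have h4 : 3 ≤ 3^(q+1).toNat := by
    calc (3:ℕ) = 3^1 := by norm_num
    _ ≤ 3^(q+1).toNat := Nat.pow_le_pow_right (by norm_num) (by omega)
  omega

lemma const_of_no_break (h : ℤ → Bool) (a : ℤ) (t : ℕ)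
    (hnb : ∀ e : ℤ, a ≤ e → e < a + t → h e = h (e+1)) : h a = h (a + t) := by
  induction t with
  | zero => simp
  | succ t ih =>
    have h1 : h a = h (a + t) := ih (fun e he1 he2 => hnb e he1 (by push_cast; omega))
    rw [h1, show (a + ((t:ℕ)+1 : ℕ) : ℤ) = (a + t) + 1 by push_cast; ring]
    exact hnb (a + t) (by omega) (by push_cast; omega)

lemma QF_step (n k l : ℤ) (hk : 0 ≤ k) (hkl : k < l) (hl : l ≤ n) (h : ℤ → Bool) :
    ∃ ε : ℂ, (ε = 1 ∨ ε = -1) ∧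
      QF 0 (2*n) k l (chargeOf h) (e 0 (2*n) (rest n h))
        = ε • e 0 (2*n) (rest n (flipW k l h)) := by
  obtain ⟨ε, hε, heq⟩ := QF_e 0 (2*n) k l (by omega) (by omega) hkl (chargeOf h) (rest n h)
    (fun j hj hj1 hj2 => by
      cases hh : h j
      · exact Or.inl ⟨chargeOf_false hh, hh⟩
      · exact Or.inr ⟨chargeOf_true hh, hh⟩)
  refine ⟨ε, hε, ?_⟩
  rw [heq]
  have hcfg : (fun x : {i : ℤ // i ∈ Finset.Icc 0 (2*n)} =>
      if 2*k ≤ x.1 ∧ x.1 ≤ 2*l then decide (chargeOf h x.1 = 1) else rest n h x)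
      = rest n (flipW k l h) := by
    funext x
    show _ = flipW k l h x.1
    by_cases hx : 2*k ≤ x.1 ∧ x.1 ≤ 2*l
    · rw [if_pos hx, flipW_in _ _ _ _ hx.1 hx.2]
      cases hh : h x.1
      · rw [decide_eq_true (chargeOf_false hh)]; rfl
      · rw [decide_eq_false (by rw [chargeOf_true hh]; norm_num)]; rfl
    · rw [if_neg hx, flipW_out _ _ _ _ hx]; rfl
  rw [hcfg]

lemma Inv_vac (n : ℤ) (hn : 1 ≤ n) : Inv n (fun _ => false) := by
  refine ⟨fun i _ _ hf => ?_, rfl, rfl, fun _ _ => rfl⟩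
  rcases hf with ⟨_, p, _⟩ | ⟨p, _, _⟩ <;> exact Bool.noConfusion p

lemma vac_case (n : ℤ) (hn : 1 ≤ n) (h : ℤ → Bool) (hvac : ∀ i, h i = false) :
    ∃ L : List ((ℤ × ℤ) × (ℤ → ℤ)), L ≠ [] ∧
      (∀ c ∈ L, 0 ≤ c.1.1 ∧ c.1.1 < c.1.2 ∧ c.1.2 ≤ n ∧ memXi c.1.1 c.1.2 c.2) ∧
      ∃ ε : ℂ, (ε = 1 ∨ ε = -1) ∧
        (L.map fun c => QF 0 (2*n) c.1.1 c.1.2 c.2).prod (e 0 (2*n) (fun _ => false))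
          = ε • e 0 (2*n) (rest n h) := by
  have hveq : h = (fun _ => false) := funext hvac
  subst hveq
  set v : ℤ → Bool := fun _ => false with hv
  have hInv : Inv n v := Inv_vac n hn
  set h1 : ℤ → Bool := flipW 0 n v with hh1
  have hInv1 : Inv n h1 := Inv_flipW n 0 n v hInv le_rfl (by omega) le_rfl rfl rfl
  obtain ⟨ε1, hε1, heq1⟩ := QF_step n 0 n (le_refl 0) (by omega) le_rfl v
  obtain ⟨ε2, hε2, heq2⟩ := QF_step n 0 n (le_refl 0) (by omega) le_rfl h1
  refine ⟨[((0, n), chargeOf h1), ((0, n), chargeOf v)], by simp, ?_, ε1 * ε2,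
    pm_mul hε1 hε2, ?_⟩
  · intro c hc
    simp only [List.mem_cons, List.not_mem_nil, or_false] at hc
    rcases hc with hc | hc <;> subst hc
    · exact ⟨le_rfl, show (0:ℤ) < n by omega, le_rfl,
        memXi_chargeOf n 0 n h1 hInv1 le_rfl (by omega) le_rfl
          (by have := hInv1.2.1; simpa using this) (hInv1.2.2.1)⟩
    · exact ⟨le_rfl, show (0:ℤ) < n by omega, le_rfl,
        memXi_chargeOf n 0 n v hInv le_rfl (by omega) le_rfl rfl rfl⟩
  · simp only [List.map_cons, List.map_nil, List.prod_cons, List.prod_nil, mul_one,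
      Module.End.mul_apply]
    have hvrest : e 0 (2*n) (fun _ => false) = e 0 (2*n) (rest n v) := rfl
    rw [hvrest, heq1, map_smul, heq2, smul_smul, flipW_flipW]

end Part5
section Part6

lemma no_break_all_false (n : ℤ) (h : ℤ → Bool) (hInv : Inv n h)
    (hnb : ∀ e : ℤ, -1 ≤ e → e ≤ 2*n → h e = h (e+1)) : ∀ i : ℤ, h i = false := by
  intro i
  by_cases hi : 0 ≤ i ∧ i ≤ 2*n
  · have hc := const_of_no_break h (-1) (i+1).toNat (fun e he1 he2 => hnb e he1 (by omega))
    have h1 : (-1 : ℤ) + ((i+1).toNat : ℤ) = i := by omega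
    rw [h1] at hc
    rw [← hc]
    exact hInv.2.2.2 (-1) (by omega)
  · exact hInv.2.2.2 i (by omega)

lemma forbidden_of_breaks {h : ℤ → Bool} {l : ℤ} (h1 : ¬ (h (2*l-1) = h (2*l)))
    (h2 : ¬ (h (2*l) = h (2*l+1))) : forbiddenAt h l := by
  unfold forbiddenAt
  cases b1 : h (2*l-1) <;> cases b2 : h (2*l) <;> cases b3 : h (2*l+1) <;> simp_all

lemma not_eq_bool {x y : Bool} (hxy : ¬ (x = y)) : (!x) = y := by
  cases x <;> cases y <;> simp_all

lemma main_ind (n : ℤ) (hn : 1 ≤ n) : ∀ (μ : ℕ) (h : ℤ → Bool), meas n h ≤ μ → Inv n h →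
    ∃ L : List ((ℤ × ℤ) × (ℤ → ℤ)), L ≠ [] ∧
      (∀ c ∈ L, 0 ≤ c.1.1 ∧ c.1.1 < c.1.2 ∧ c.1.2 ≤ n ∧ memXi c.1.1 c.1.2 c.2) ∧
      ∃ ε : ℂ, (ε = 1 ∨ ε = -1) ∧
        (L.map fun c => QF 0 (2*n) c.1.1 c.1.2 c.2).prod (e 0 (2*n) (fun _ => false))
          = ε • e 0 (2*n) (rest n h) := by
  intro μ
  induction μ with
  | zero =>
    intro h hm hInv
    apply vac_case n hn h
    apply no_break_all_false n h hInv
    intro eg he1 he2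
    by_contra hb
    have hmem : eg ∈ Finset.Icc (-1:ℤ) (2*n) := Finset.mem_Icc.mpr ⟨he1, he2⟩
    have hle := Finset.single_le_sum
      (f := fun e => if h e = h (e+1) then 0 else 3^(e+1).toNat)
      (fun i _ => Nat.zero_le _) hmem
    rw [if_neg hb] at hle
    have h4 : 1 ≤ 3^(eg+1).toNat := Nat.one_le_pow _ _ (by norm_num)
    unfold meas at hm
    omega
  | succ μ ih =>
    intro h hm hInv
    by_cases hE : ∀ e : ℤ, -1 ≤ e → e ≤ 2*n → h e = h (e+1)
    · exact vac_case n hn h (no_break_all_false n h hInv hE)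
    push_neg at hE
    obtain ⟨e0, he01, he02, he0b⟩ := hE
    set E := (Finset.Icc (-1:ℤ) (2*n)).filter (fun e => ¬ (h e = h (e+1))) with hEdef
    have hene : E.Nonempty := ⟨e0, Finset.mem_filter.mpr ⟨Finset.mem_Icc.mpr ⟨he01, he02⟩, he0b⟩⟩
    set m := E.max' hene with hmdef
    have hmE := E.max'_mem hene
    have hmIcc := (Finset.mem_filter.mp hmE).1
    have hm1 : -1 ≤ m ∧ m ≤ 2*n := Finset.mem_Icc.mp hmIcc
    have hbm : ¬ (h m = h (m+1)) := (Finset.mem_filter.mp hmE).2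
    have hnb : ∀ e : ℤ, m < e → h e = h (e+1) := by
      intro e' he'
      by_cases heI : e' ∈ Finset.Icc (-1:ℤ) (2*n)
      · by_contra hb
        have hmem : e' ∈ E := Finset.mem_filter.mpr ⟨heI, hb⟩
        have := Finset.le_max' E e' hmem
        omega
      · rw [Finset.mem_Icc] at heI
        rw [hInv.2.2.2 e' (by omega), hInv.2.2.2 (e'+1) (by omega)]
    have hm0 : m ≠ 0 := fun hc => hbm (by rw [hc]; exact hInv.2.1)
    have hmn1 : m ≠ 2*n - 1 := fun hc =>
      hbm (by rw [hc, show 2*n-1+1 = 2*n by ring]; exact hInv.2.2.1)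
    have hmneg : m ≠ -1 := by
      intro hc
      have hz : h 0 = false := by
        have hcst := const_of_no_break h 0 (2*n+1).toNat (fun e' he1 he2 => hnb e' (by omega))
        have harr : (0:ℤ) + ((2*n+1).toNat : ℤ) = 2*n+1 := by omega
        rw [harr] at hcst
        rw [hcst]
        exact hInv.2.2.2 _ (by omega)
      apply hbm
      rw [hc, show (-1:ℤ)+1 = 0 by ring, hz]
      exact hInv.2.2.2 (-1) (by omega)
    rcases Int.even_or_odd m with ⟨l, hl⟩ | ⟨k', hk'⟩
    · -- even maximal break : m = 2*l
      have hl2 : m = 2*l := by omega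
      have hl1 : 1 ≤ l := by omega
      have hln : l ≤ n := by omega
      have hbm2 : ¬ (h (2*l) = h (2*l+1)) := by
        have hbmx := hbm
        rw [show m = 2*l by omega] at hbmx
        exact hbmx
      have hL : h (2*(0:ℤ)) = h (2*(0:ℤ)+1) := by simpa using hInv.2.1
      have hR : h (2*l-1) = h (2*l) := by
        by_cases hleqn : l = n
        · subst hleqn; exact hInv.2.2.1
        · by_contra hcon
          exact hInv.1 l (by omega) (by omega) (forbidden_of_breaks hcon hbm2)
      set h1 := flipW 0 l h with hh1
      have hInvh1 : Inv n h1 := Inv_flipW n 0 l h hInv le_rfl (by omega) hln hL hR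
      have hmeas : meas n h1 < meas n h := by
        apply meas_lt n hn h h1 (2*l) (by omega) (by omega)
        · intro e' he1 he2 hne1 hne2
          by_cases hc1 : 0 ≤ e' ∧ e' ≤ 2*l - 1
          · rw [hh1, flipW_in 0 l h e' (by omega) (by omega),
              flipW_in 0 l h (e'+1) (by omega) (by omega)]
            simp
          · rw [hh1, flipW_out 0 l h e' (by omega), flipW_out 0 l h (e'+1) (by omega)]
        · exact hbm2
        · rw [hh1, flipW_in 0 l h (2*l) (by omega) (by omega),
            flipW_out 0 l h (2*l+1) (by omega)]
          exact not_eq_bool hbm2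
      obtain ⟨L', hL'ne, hL'mem, ε', hε', hprod⟩ := ih h1 (by omega) hInvh1
      have hR1 : h1 (2*l-1) = h1 (2*l) := by
        rw [hh1, flipW_in 0 l h _ (by omega) (by omega),
          flipW_in 0 l h _ (by omega) (by omega), hR]
      have hL1 : h1 (2*(0:ℤ)) = h1 (2*(0:ℤ)+1) := by simpa using hInvh1.2.1
      obtain ⟨ε2, hε2, heq2⟩ := QF_step n 0 l le_rfl (by omega) hln h1
      rw [show flipW 0 l h1 = h from by rw [hh1, flipW_flipW]] at heq2
      refine ⟨((0, l), chargeOf h1) :: L', by simp, ?_, ε' * ε2, pm_mul hε' hε2, ?_⟩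
      · intro c hc
        rcases List.mem_cons.mp hc with hc | hc
        · subst hc
          exact ⟨le_rfl, show (0:ℤ) < l by omega, hln,
            memXi_chargeOf n 0 l h1 hInvh1 le_rfl (by omega) hln hL1 hR1⟩
        · exact hL'mem c hc
      · simp only [List.map_cons, List.prod_cons, Module.End.mul_apply]
        rw [hprod, map_smul, heq2, smul_smul]
    · -- odd maximal break : m = 2*k - 1
      set k := k' + 1 with hkdef
      have hk2 : m = 2*k - 1 := by omega
      have hk1 : 1 ≤ k := by omega
      have hkn : k < n := by omega
      have hbm2 : ¬ (h (2*k-1) = h (2*k)) := by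
        have hbmx := hbm
        rw [show m = 2*k-1 by omega, show 2*k-1+1 = 2*k by ring] at hbmx
        exact hbmx
      have hLk : h (2*k) = h (2*k+1) := hnb (2*k) (by omega)
      set h1 := flipW k n h with hh1
      have hInvh1 : Inv n h1 := Inv_flipW n k n h hInv (by omega) hkn le_rfl hLk hInv.2.2.1
      set h2 := flipW 0 n h1 with hh2
      have hL1' : h1 (2*(0:ℤ)) = h1 (2*(0:ℤ)+1) := by simpa using hInvh1.2.1
      have hInvh2 : Inv n h2 := Inv_flipW n 0 n h1 hInvh1 le_rfl (by omega) le_rfl hL1'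
        hInvh1.2.2.1
      have hh2e : ∀ j : ℤ, h2 j = if 0 ≤ j ∧ j ≤ 2*k-1 then !(h j) else h j := by
        intro j
        by_cases c1 : 0 ≤ j ∧ j ≤ 2*k-1
        · rw [if_pos c1, hh2, flipW_in 0 n h1 j (by omega) (by omega), hh1,
            flipW_out k n h j (by omega)]
        · rw [if_neg c1]
          by_cases c2 : 2*k ≤ j ∧ j ≤ 2*n
          · rw [hh2, flipW_in 0 n h1 j (by omega) (by omega), hh1,
              flipW_in k n h j (by omega) (by omega), Bool.not_not]
          · rw [hh2, flipW_out 0 n h1 j (by omega), hh1, flipW_out k n h j (by omega)]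
      have hmeas : meas n h2 < meas n h := by
        apply meas_lt n hn h h2 (2*k-1) (by omega) (by omega)
        · intro e' he1 he2 hne1 hne2
          rw [hh2e e', hh2e (e'+1)]
          by_cases c1 : 0 ≤ e' ∧ e' ≤ 2*k-2
          · rw [if_pos (show 0 ≤ e' ∧ e' ≤ 2*k-1 by omega),
              if_pos (show 0 ≤ e'+1 ∧ e'+1 ≤ 2*k-1 by omega)]
            simp
          · rw [if_neg (show ¬(0 ≤ e' ∧ e' ≤ 2*k-1) by omega),
              if_neg (show ¬(0 ≤ e'+1 ∧ e'+1 ≤ 2*k-1) by omega)]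
        · rw [show (2*k-1+1 : ℤ) = 2*k by ring]
          exact hbm2
        · rw [show (2*k-1+1 : ℤ) = 2*k by ring, hh2e (2*k-1), hh2e (2*k),
            if_pos (show 0 ≤ 2*k-1 ∧ 2*k-1 ≤ 2*k-1 by omega),
            if_neg (show ¬(0 ≤ 2*k ∧ 2*k ≤ 2*k-1) by omega)]
          exact not_eq_bool hbm2
      obtain ⟨L', hL'ne, hL'mem, ε', hε', hprod⟩ := ih h2 (by omega) hInvh2
      have hL2' : h2 (2*(0:ℤ)) = h2 (2*(0:ℤ)+1) := by simpa using hInvh2.2.1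
      have hLk1 : h1 (2*k) = h1 (2*k+1) := by
        rw [hh1, flipW_in k n h _ (by omega) (by omega),
          flipW_in k n h _ (by omega) (by omega), hLk]
      obtain ⟨ε2, hε2, heq2⟩ := QF_step n 0 n le_rfl (by omega) le_rfl h2
      rw [show flipW 0 n h2 = h1 from by rw [hh2, flipW_flipW]] at heq2
      obtain ⟨ε3, hε3, heq3⟩ := QF_step n k n (by omega) hkn le_rfl h1
      rw [show flipW k n h1 = h from by rw [hh1, flipW_flipW]] at heq3
      refine ⟨((k, n), chargeOf h1) :: ((0, n), chargeOf h2) :: L', by simp, ?_,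
        ε' * ε2 * ε3, pm_mul (pm_mul hε' hε2) hε3, ?_⟩
      · intro c hc
        rcases List.mem_cons.mp hc with hc | hc
        · subst hc
          exact ⟨show (0:ℤ) ≤ k by omega, show (k:ℤ) < n by omega, le_rfl,
            memXi_chargeOf n k n h1 hInvh1 (by omega) hkn le_rfl hLk1 hInvh1.2.2.1⟩
        rcases List.mem_cons.mp hc with hc | hc
        · subst hc
          exact ⟨le_rfl, show (0:ℤ) < n by omega, le_rfl,
            memXi_chargeOf n 0 n h2 hInvh2 le_rfl (by omega) le_rfl hL2' hInvh2.2.2.1⟩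
        · exact hL'mem c hc
      · simp only [List.map_cons, List.prod_cons, Module.End.mul_apply]
        rw [hprod, map_smul, heq2, map_smul, map_smul, heq3, smul_smul, smul_smul]

end Part6

/-- every configuration in `Υ̂_{0,n}` is obtained, up to a sign, by
applying finitely many local fermion charge operators `Q(f_j)`, `f_j ∈ Ξ̂(0,n)`,
to the Fock vector on `S = {0, …, 2n}`. -/
theorem ground_state_from_local_fermion_charges (n : ℕ) (hn : 1 ≤ n)
    (g : Config 0 (2 * (n : ℤ)))
    (hg : memUps 0 (n : ℤ) (ext 0 (2 * (n : ℤ)) g)) :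
    ∃ L : List ((ℤ × ℤ) × (ℤ → ℤ)), L ≠ [] ∧
      (∀ c ∈ L, 0 ≤ c.1.1 ∧ c.1.1 < c.1.2 ∧ c.1.2 ≤ (n : ℤ) ∧ memXi c.1.1 c.1.2 c.2) ∧
      ∃ ε : ℂ, (ε = 1 ∨ ε = -1) ∧
        (L.map fun c => QF 0 (2 * (n : ℤ)) c.1.1 c.1.2 c.2).prod
            (e 0 (2 * (n : ℤ)) (fun _ => false))
          = ε • e 0 (2 * (n : ℤ)) g := by
  have hn' : (1 : ℤ) ≤ (n : ℤ) := by exact_mod_cast hn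
  have hInv : Inv (n : ℤ) (ext 0 (2 * (n : ℤ)) g) := by
    obtain ⟨h1, h2, h3⟩ := hg
    refine ⟨h1, by simpa using h2, h3, ?_⟩
    intro i hi
    unfold ext
    rw [dif_neg]
    rw [Finset.mem_Icc]
    omega
  obtain ⟨L, hLne, hLmem, ε, hε, hprod⟩ := main_ind (n : ℤ) hn'
    (meas (n : ℤ) (ext 0 (2 * (n : ℤ)) g)) (ext 0 (2 * (n : ℤ)) g) le_rfl hInv
  have hrg : rest (n : ℤ) (ext 0 (2 * (n : ℤ)) g) = g := by
    funext x
    show ext 0 (2 * (n : ℤ)) g x.1 = g x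
    unfold ext
    rw [dif_pos x.2]
  rw [hrg] at hprod
  exact ⟨L, hLne, hLmem, ε, hε, hprod⟩

end Nicolai
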